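/- arXiv:0811.4462 — 3 statements merged into one kernel-verified Lean document; each statement's English description precedes it below -/
import Mathlib

section
/- Classification of H-orbits on regular antidiagonal elements: for all b, c ∈ F^× there is a unique γ ∈ 𝒦 with b/c ∈ γ·(F^×)⁴, and for this γ there exist a ∈ F^× with a² = bc/γ and t ∈ F^× such that diag(t, t⁻¹)⁻¹ · [[0,b],[c,0]] · diag(t, t⁻¹) = [[0, aγ],[a, 0]]. In particular, every antidiagonal trace-zero matrix with nonzero entries is H-conjugate to an element of 𝔱_γ for exactly one γ ∈ 𝒦. -/
open MeasureTheory Matrix Filter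
open scoped Classical Topology Pointwise

noncomputable section

abbrev Mat (F : Type) [Field F] : Type := Matrix (Fin 2) (Fin 2) F

abbrev SL2 (F : Type) [Field F] : Type := Matrix.SpecialLinearGroup (Fin 2) F

instance (F : Type) [Field F] [MeasurableSpace F] : MeasurableSpace (Mat F) :=
  inferInstanceAs (MeasurableSpace (Fin 2 → Fin 2 → F))

instance (F : Type) [Field F] [MeasurableSpace F] : MeasurableSpace (SL2 F) :=
  inferInstanceAs (MeasurableSpace { A : Mat F // A.det = 1 })

instance (F : Type) [Field F] [TopologicalSpace F] : TopologicalSpace (Mat F) :=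
  inferInstanceAs (TopologicalSpace (Fin 2 → Fin 2 → F))

instance (F : Type) [Field F] [TopologicalSpace F] : TopologicalSpace (SL2 F) :=
  inferInstanceAs (TopologicalSpace { A : Mat F // A.det = 1 })

variable {F : Type} [Field F]

/-- The ring of integers of `F`, described via the valuation `ν`. -/
def Oset (ν : F → ℤ) : Set F := {x : F | x = 0 ∨ 0 ≤ ν x}

/-- The maximal compact subgroup `K = SL₂(𝒪)` of `SL₂(F)`. -/
def Kset (ν : F → ℤ) : Set (SL2 F) :=
  {g : SL2 F | ∀ i j : Fin 2, (g : Mat F) i j ∈ Oset ν}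

/-- `CartanLE ν g μ` says that `Cartan(g) = -min_{i,j} ν(g i j) ≤ μ`. -/
def CartanLE (ν : F → ℤ) (g : Mat F) (μ : ℤ) : Prop :=
  ∀ i j : Fin 2, g i j = 0 ∨ -μ ≤ ν (g i j)

/-- The valuation extended by `ν(0) = ⊤`. -/
def nuExt (ν : F → ℤ) (x : F) : WithTop ℤ := if x = 0 then ⊤ else (ν x : WithTop ℤ)

/-- The normalized absolute value `|x| = q^(-ν x)`. -/
def absF (q : ℕ) (ν : F → ℤ) (x : F) : ℝ := if x = 0 then 0 else (q : ℝ) ^ (-(ν x))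

/-- The involution `θ = Inn(diag(1,-1))` on `SL₂(F)`. -/
def thetaSL (g : SL2 F) : SL2 F :=
  ⟨!![(g : Mat F) 0 0, -((g : Mat F) 0 1); -((g : Mat F) 1 0), (g : Mat F) 1 1], by
    have h : ((g : Mat F)).det = 1 := g.2
    rw [Matrix.det_fin_two] at h
    rw [Matrix.det_fin_two_of]
    linear_combination h⟩

/-- The map `τ(g) = θ(g)⁻¹ g`. -/
def tauSL (g : SL2 F) : SL2 F := (thetaSL g)⁻¹ * g

/-- Arthur's truncation function `ω̄(g,μ)`. -/
def omegaBar (ν : F → ℤ) (g : SL2 F) (μ : ℤ) : ℝ :=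
  if CartanLE ν ((tauSL g : Mat F)) μ then 1 else 0

/-- `diag(a, a⁻¹)`, the parametrization of the torus `H`. -/
def Hmat (a : F) : SL2 F :=
  if h : a ≠ 0 then
    ⟨!![a, 0; 0, a⁻¹], by rw [Matrix.det_fin_two_of]; field_simp; ring⟩
  else 1

/-- The parametrization of the split torus `A = {[[x,y],[y,x]] : x² - y² = 1}` by
`t = x + y ∈ F^×`. -/
def Amat [CharZero F] (t : F) : SL2 F :=
  if h : t ≠ 0 then
    ⟨!![(t + t⁻¹) / 2, (t - t⁻¹) / 2; (t - t⁻¹) / 2, (t + t⁻¹) / 2], by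
      rw [Matrix.det_fin_two_of]; field_simp; ring⟩
  else 1

/-- The unipotent radical `N` of the Borel `B` stabilizing `F·(1,1)ᵀ`. -/
def NBel (s : F) : SL2 F :=
  ⟨!![1 + s, -s; s, 1 - s], by rw [Matrix.det_fin_two_of]; ring⟩

/-- The unipotent radical `N̄` of the opposite Borel `B̄` stabilizing `F·(1,-1)ᵀ`. -/
def NBbarel (s : F) : SL2 F :=
  ⟨!![1 + s, s; -s, 1 - s], by rw [Matrix.det_fin_two_of]; ring⟩

/-- Upper triangular unipotent `[[1,s],[0,1]]`. -/
def UpT (s : F) : SL2 F :=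
  ⟨!![1, s; 0, 1], by rw [Matrix.det_fin_two_of]; ring⟩

/-- The element `r_γ` attached to a square root `δ` of `γ`. -/
def rmat [CharZero F] (δ : F) : SL2 F :=
  if h : δ ≠ 0 then
    ⟨!![(1 + δ) / 2, (δ - 1) / 2; (δ - 1) / (2 * δ), (1 + δ) / (2 * δ)], by
      rw [Matrix.det_fin_two_of]; field_simp; ring⟩
  else 1

/-- `diag(ϖ^(-m), ϖ^m)`. -/
def Dmat (ϖ : F) (m : ℤ) : SL2 F :=
  if h : ϖ ≠ 0 then
    ⟨!![ϖ ^ (-m), 0; 0, ϖ ^ m], by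
      have h' : ϖ ^ m ≠ 0 := zpow_ne_zero _ h
      rw [Matrix.det_fin_two_of, _root_.zpow_neg]
      field_simp
      ring⟩
  else 1

/-- Conjugation action: `g⁻¹ X g` for `g ∈ SL₂(F)` and a matrix `X`. -/
def SL2conj (g : SL2 F) (X : Mat F) : Mat F :=
  ((g⁻¹ : SL2 F) : Mat F) * X * ((g : SL2 F) : Mat F)

/-- Coordinates on the Lie algebra `𝔰𝔩₂`: `(a,b,c) ↦ [[a,b],[c,-a]]`. -/
def M3 (v : F × F × F) : Mat F := !![v.1, v.2.1; v.2.2, -v.1]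

/-- The antidiagonal matrix `[[0,b],[c,0]] ∈ 𝔥^⊥`. -/
def antidiag (b c : F) : Mat F := !![0, b; c, 0]

/-- The diagonal matrix `diag(h,-h) ∈ 𝔥`. -/
def diagMat (h : F) : Mat F := !![h, 0; 0, -h]

/-- The Fourier transform on `𝔰𝔩₂(F)` with respect to the character `ψ ∘ tr(XY)` and
the (self-dual) Haar measure `volg` in the coordinates `M3`. -/
def FT [MeasurableSpace F] (ψ : F → ℂ) (volg : Measure (F × F × F))
    (f : Mat F → ℂ) (Y : Mat F) : ℂ :=
  ∫ v : F × F × F, f (M3 v) * ψ ((M3 v * Y).trace) ∂volg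

/-- `f̃(X) = ∫_K f̂(k⁻¹ X k) dk`. -/
def Ktilde [MeasurableSpace F] (ψ : F → ℂ) (volg : Measure (F × F × F))
    (volK : Measure (SL2 F)) (f : Mat F → ℂ) (X : Mat F) : ℂ :=
  ∫ k : SL2 F, FT ψ volg f (SL2conj k X) ∂volK

/-- The diagonal torus `H`, the fixed points of `θ`. -/
def Hset : Set (SL2 F) :=
  {g : SL2 F | (g : Mat F) 0 1 = 0 ∧ (g : Mat F) 1 0 = 0}

/-- The split torus `A`. -/
def Aset : Set (SL2 F) :=
  {g : SL2 F | ∃ x y : F, (g : Mat F) = !![x, y; y, x]}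

/-- The centralizer `T_γ` of `𝔱_γ` in `SL₂(F)`. -/
def Tset (γ : F) : Set (SL2 F) :=
  {g : SL2 F | ∀ b : F, (g : Mat F) * antidiag (b * γ) b = antidiag (b * γ) b * (g : Mat F)}

/-- `d(g) = max(|H_B(g)|, |H_B̄(g)|)`. -/
def dOf (HB HBbar : SL2 F → ℤ) (g : SL2 F) : ℤ := max |HB g| |HBbar g|

lemma conj_calc {F : Type} [Field F] (t b c : F) (ht : t ≠ 0) :
    SL2conj (Hmat t) (antidiag b c) = antidiag (b / t ^ 2) (c * t ^ 2) := by
  have hH : ((Hmat t : SL2 F) : Mat F) = !![t, 0; 0, t⁻¹] := by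
    simp [Hmat, ht]
  unfold SL2conj antidiag
  ext i j
  rw [Matrix.SpecialLinearGroup.coe_inv, hH]
  fin_cases i <;> fin_cases j <;>
    simp [Matrix.adjugate_fin_two, Matrix.mul_apply, Fin.sum_univ_two] <;>
    (try field_simp) <;> (try ring_nf) <;> simp

lemma antidiag_inj {F : Type} [Field F] {b c b' c' : F}
    (h : antidiag b c = antidiag b' c') : b = b' ∧ c = c' := by
  constructor
  · have := congrFun (congrFun h 0) 1; simpa [antidiag] using this
  · have := congrFun (congrFun h 1) 0; simpa [antidiag] using this

theorem H_orbit_classification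
    (p : ℕ) [Fact p.Prime] (hp2 : p ≠ 2)
    (F : Type) [Field F] [CharZero F] [TopologicalSpace F] [IsTopologicalRing F]
    [MeasurableSpace F] [BorelSpace F]
    [Algebra ℚ_[p] F] [FiniteDimensional ℚ_[p] F]
    (ν : F → ℤ) (ϖ : F)
    (hϖ0 : ϖ ≠ 0) (hϖ1 : ν ϖ = 1)
    (hνmul : ∀ x y : F, x ≠ 0 → y ≠ 0 → ν (x * y) = ν x + ν y)
    (hνadd : ∀ x y : F, x ≠ 0 → y ≠ 0 → x + y ≠ 0 → min (ν x) (ν y) ≤ ν (x + y))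
    (hνp : 0 < ν ((p : F)))
    (hνext : ∀ x : ℚ_[p], x ≠ 0 → ν (algebraMap ℚ_[p] F x) = ν ((p : F)) * x.valuation)
    (hνnhds : ∀ s : Set F, s ∈ nhds (0 : F) ↔ ∃ n : ℤ, {x : F | x = 0 ∨ n ≤ ν x} ⊆ s)
    (𝒦 𝒦' : Finset F) (μ4 : ℕ)
    (h𝒦1 : (1 : F) ∈ 𝒦)
    (h𝒦0 : ∀ γ ∈ 𝒦, γ ≠ 0)
    (h𝒦rep : ∀ x : F, x ≠ 0 → ∃! γ : F, γ ∈ 𝒦 ∧ ∃ t : F, t ≠ 0 ∧ x = γ * t ^ 4)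
    (h𝒦' : ∀ γ : F, γ ∈ 𝒦' ↔ γ ∈ 𝒦 ∧ ∃ δ : F, δ ≠ 0 ∧ δ ^ 2 = γ)
    (hμ4 : μ4 = Nat.card {x : F // x ^ 4 = 1}) (hμ4pos : 0 < μ4) :
    ∀ b c : F, b ≠ 0 → c ≠ 0 →
      (∃! γ : F, γ ∈ 𝒦 ∧ ∃ t : F, t ≠ 0 ∧ b / c = γ * t ^ 4) ∧
      (∀ γ ∈ 𝒦, (∃ t : F, t ≠ 0 ∧ b / c = γ * t ^ 4) →
        ∃ a t : F, a ≠ 0 ∧ t ≠ 0 ∧ a ^ 2 = b * c / γ ∧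
          SL2conj (Hmat t) (antidiag b c) = antidiag (a * γ) a) ∧
      (∃! γ : F, γ ∈ 𝒦 ∧ ∃ t a : F, t ≠ 0 ∧ a ≠ 0 ∧
        SL2conj (Hmat t) (antidiag b c) = antidiag (a * γ) a) := by
  intro b c hb hc
  have hbc : b / c ≠ 0 := div_ne_zero hb hc
  have Hrep := h𝒦rep (b / c) hbc
  have part2 : ∀ γ ∈ 𝒦, (∃ t : F, t ≠ 0 ∧ b / c = γ * t ^ 4) →
      ∃ a t : F, a ≠ 0 ∧ t ≠ 0 ∧ a ^ 2 = b * c / γ ∧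
        SL2conj (Hmat t) (antidiag b c) = antidiag (a * γ) a := by
    intro γ hγ ⟨t, ht, heq⟩
    have hγ0 : γ ≠ 0 := h𝒦0 γ hγ
    refine ⟨c * t ^ 2, t, mul_ne_zero hc (pow_ne_zero _ ht), ht, ?_, ?_⟩
    · field_simp at heq ⊢
      linear_combination -heq
    · rw [conj_calc t b c ht]
      have h1 : b / t ^ 2 = c * t ^ 2 * γ := by
        field_simp at heq ⊢
        linear_combination heq
      rw [h1]
  refine ⟨Hrep, part2, ?_⟩
  obtain ⟨γ, ⟨hγ, hγex⟩, huniq⟩ := Hrep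
  obtain ⟨a, t, ha, ht, _, hconj⟩ := part2 γ hγ hγex
  refine ⟨γ, ⟨hγ, t, a, ht, ha, hconj⟩, ?_⟩
  rintro γ' ⟨hγ', t', a', ht', ha', hconj'⟩
  apply huniq
  refine ⟨hγ', t', ht', ?_⟩
  rw [conj_calc t' b c ht'] at hconj'
  obtain ⟨h1, h2⟩ := antidiag_inj hconj'
  have hc' : a' = c * t' ^ 2 := h2.symm
  subst hc'
  field_simp at h1 ⊢
  linear_combination h1

end
end

section
/- Cartan decomposition of SL₂ over a p-adic field: for every g ∈ SL₂(F), setting m := −min{ν(g₁₁), ν(g₁₂), ν(g₂₁), ν(g₂₂)}, one has m ≥ 0 and there exist k₁, k₂ ∈ K = SL₂(𝒪) with g = k₁ · diag(ϖ^(−m), ϖ^m) · k₂. -/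
open MeasureTheory Matrix Filter
open scoped Classical Topology Pointwise

noncomputable section

variable {F : Type} [Field F]

lemma nu_one' (ν : F → ℤ) (hνmul : ∀ x y : F, x ≠ 0 → y ≠ 0 → ν (x * y) = ν x + ν y) :
    ν 1 = 0 := by
  have := hνmul 1 1 one_ne_zero one_ne_zero
  simpa using this.symm

lemma nu_neg' (ν : F → ℤ) (hνmul : ∀ x y : F, x ≠ 0 → y ≠ 0 → ν (x * y) = ν x + ν y)
    (x : F) (hx : x ≠ 0) : ν (-x) = ν x := by
  have hm1 : ν (-1 : F) = 0 := by
    have h2 := hνmul (-1) (-1) (by norm_num) (by norm_num)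
    have h1 := nu_one' ν hνmul
    simp only [neg_mul_neg, one_mul, h1] at h2
    omega
  have := hνmul (-1) x (by norm_num) hx
  simpa [hm1] using this

lemma nu_inv' (ν : F → ℤ) (hνmul : ∀ x y : F, x ≠ 0 → y ≠ 0 → ν (x * y) = ν x + ν y)
    (x : F) (hx : x ≠ 0) : ν x⁻¹ = -ν x := by
  have := hνmul x x⁻¹ hx (inv_ne_zero hx)
  rw [mul_inv_cancel₀ hx, nu_one' ν hνmul] at this
  omega

lemma nu_zpow' (ν : F → ℤ) (hνmul : ∀ x y : F, x ≠ 0 → y ≠ 0 → ν (x * y) = ν x + ν y)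
    (ϖ : F) (hϖ0 : ϖ ≠ 0) (hϖ1 : ν ϖ = 1) (n : ℤ) : ν (ϖ ^ n) = n := by
  induction n using Int.induction_on with
  | zero => simpa using nu_one' ν hνmul
  | succ k ih =>
      have h : ϖ ^ ((k : ℤ) + 1) = ϖ ^ (k : ℤ) * ϖ := by
        rw [zpow_add₀ hϖ0]; simp
      rw [h, hνmul _ _ (zpow_ne_zero _ hϖ0) hϖ0, ih, hϖ1]
  | pred k ih =>
      have h : ϖ ^ (-(k : ℤ) - 1) * ϖ = ϖ ^ (-(k : ℤ)) := by
        rw [← zpow_add_one₀ hϖ0]; ring_nf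
      have h2 := hνmul (ϖ ^ (-(k : ℤ) - 1)) ϖ (zpow_ne_zero _ hϖ0) hϖ0
      rw [h, ih, hϖ1] at h2
      omega

lemma O_add' (ν : F → ℤ) (hνmul : ∀ x y : F, x ≠ 0 → y ≠ 0 → ν (x * y) = ν x + ν y)
    (hνadd : ∀ x y : F, x ≠ 0 → y ≠ 0 → x + y ≠ 0 → min (ν x) (ν y) ≤ ν (x + y))
    {x y : F} (hx : x ∈ Oset ν) (hy : y ∈ Oset ν) : x + y ∈ Oset ν := by
  rcases hx with hx | hx
  · simpa [hx] using hy
  rcases hy with hy | hy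
  · simpa [hy] using (show x ∈ Oset ν from Or.inr hx)
  by_cases hx0 : x = 0
  · simp [hx0]; right; exact hy
  by_cases hy0 : y = 0
  · simp [hy0]; right; exact hx
  by_cases hxy : x + y = 0
  · exact Or.inl hxy
  · right
    have := hνadd x y hx0 hy0 hxy
    omega

lemma O_mul' (ν : F → ℤ) (hνmul : ∀ x y : F, x ≠ 0 → y ≠ 0 → ν (x * y) = ν x + ν y)
    {x y : F} (hx : x ∈ Oset ν) (hy : y ∈ Oset ν) : x * y ∈ Oset ν := by
  by_cases hx0 : x = 0
  · simp [Oset, hx0]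
  by_cases hy0 : y = 0
  · simp [Oset, hy0]
  rcases hx with hx | hx; · exact absurd hx hx0
  rcases hy with hy | hy; · exact absurd hy hy0
  right
  rw [hνmul x y hx0 hy0]
  omega

lemma K_mul' (ν : F → ℤ) (hνmul : ∀ x y : F, x ≠ 0 → y ≠ 0 → ν (x * y) = ν x + ν y)
    (hνadd : ∀ x y : F, x ≠ 0 → y ≠ 0 → x + y ≠ 0 → min (ν x) (ν y) ≤ ν (x + y))
    {a b : SL2 F} (ha : a ∈ Kset ν) (hb : b ∈ Kset ν) : a * b ∈ Kset ν := by
  intro i j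
  have : ((a * b : SL2 F) : Mat F) i j = ∑ k : Fin 2, (a : Mat F) i k * (b : Mat F) k j := by
    simp [Matrix.mul_apply]
  rw [this, Fin.sum_univ_two]
  exact O_add' ν hνmul hνadd (O_mul' ν hνmul (ha i 0) (hb 0 j)) (O_mul' ν hνmul (ha i 1) (hb 1 j))

def wK : SL2 F := ⟨!![0, 1; -1, 0], by rw [Matrix.det_fin_two_of]; ring⟩
def wKi : SL2 F := ⟨!![0, -1; 1, 0], by rw [Matrix.det_fin_two_of]; ring⟩

lemma wK_inv : (wK : SL2 F)⁻¹ = wKi := by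
  have h : (wK : SL2 F) * wKi = 1 := by
    ext i j
    simp only [Matrix.SpecialLinearGroup.coe_mul]
    fin_cases i <;> fin_cases j <;>
      simp [wK, wKi, Matrix.mul_apply, Fin.sum_univ_two, Matrix.SpecialLinearGroup.coe_mul]
  exact inv_eq_of_mul_eq_one_right h

lemma wK_mem (ν : F → ℤ) (hνmul : ∀ x y : F, x ≠ 0 → y ≠ 0 → ν (x * y) = ν x + ν y) :
    (wK : SL2 F) ∈ Kset ν := by
  have h1 : ν (1 : F) = 0 := nu_one' ν hνmul
  have hm1 : ν (-1 : F) = 0 := by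
    rw [show (-1 : F) = -(1 : F) by ring, nu_neg' ν hνmul 1 one_ne_zero]; exact h1
  intro i j
  fin_cases i <;> fin_cases j <;> simp [wK, Oset, h1, hm1] <;> omega

lemma wKi_mem (ν : F → ℤ) (hνmul : ∀ x y : F, x ≠ 0 → y ≠ 0 → ν (x * y) = ν x + ν y) :
    (wKi : SL2 F) ∈ Kset ν := by
  have h1 : ν (1 : F) = 0 := nu_one' ν hνmul
  have hm1 : ν (-1 : F) = 0 := by
    rw [show (-1 : F) = -(1 : F) by ring, nu_neg' ν hνmul 1 one_ne_zero]; exact h1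
  intro i j
  fin_cases i <;> fin_cases j <;> simp [wKi, Oset, h1, hm1] <;> omega

lemma coe_mul_wK (g : SL2 F) :
    ((g * wK : SL2 F) : Mat F) =
      !![-((g : Mat F) 0 1), (g : Mat F) 0 0; -((g : Mat F) 1 1), (g : Mat F) 1 0] := by
  ext i j
  simp only [Matrix.SpecialLinearGroup.coe_mul]
  fin_cases i <;> fin_cases j <;>
    simp [wK, Matrix.mul_apply, Fin.sum_univ_two, Matrix.SpecialLinearGroup.coe_mul]

lemma coe_wK_mul (g : SL2 F) :
    ((wK * g : SL2 F) : Mat F) =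
      !![(g : Mat F) 1 0, (g : Mat F) 1 1; -((g : Mat F) 0 0), -((g : Mat F) 0 1)] := by
  ext i j
  simp only [Matrix.SpecialLinearGroup.coe_mul]
  fin_cases i <;> fin_cases j <;>
    simp [wK, Matrix.mul_apply, Fin.sum_univ_two, Matrix.SpecialLinearGroup.coe_mul]

lemma key_decomp (ν : F → ℤ) (ϖ : F) (hϖ0 : ϖ ≠ 0) (hϖ1 : ν ϖ = 1)
    (hνmul : ∀ x y : F, x ≠ 0 → y ≠ 0 → ν (x * y) = ν x + ν y)
    (g : SL2 F) (m : ℤ)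
    (ha : (g : Mat F) 0 0 ≠ 0) (hνa : ν ((g : Mat F) 0 0) = -m)
    (hb : (g : Mat F) 0 1 = 0 ∨ -m ≤ ν ((g : Mat F) 0 1))
    (hc : (g : Mat F) 1 0 = 0 ∨ -m ≤ ν ((g : Mat F) 1 0)) :
    ∃ k₁ ∈ Kset ν, ∃ k₂ ∈ Kset ν, g = k₁ * Dmat ϖ m * k₂ := by
  set a := (g : Mat F) 0 0 with ha_def
  set b := (g : Mat F) 0 1 with hb_def
  set c := (g : Mat F) 1 0 with hc_def
  set d := (g : Mat F) 1 1 with hd_def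
  have hdet : a * d - b * c = 1 := by
    have := g.2
    rwa [Matrix.det_fin_two] at this
  have hpm : ϖ ^ m ≠ 0 := zpow_ne_zero _ hϖ0
  have hνpm : ν (ϖ ^ m) = m := nu_zpow' ν hνmul ϖ hϖ0 hϖ1 m
  set u := a * ϖ ^ m with hu_def
  have hu : u ≠ 0 := mul_ne_zero ha hpm
  have hνu : ν u = 0 := by rw [hu_def, hνmul _ _ ha hpm, hνa, hνpm]; ring
  have hνui : ν u⁻¹ = 0 := by rw [nu_inv' ν hνmul u hu, hνu]; ring
  have h1 : ν (1 : F) = 0 := nu_one' ν hνmul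
  refine ⟨⟨!![u, 0; c * ϖ ^ m, u⁻¹], by
      rw [Matrix.det_fin_two_of]; field_simp; ring⟩, ?_,
    ⟨!![1, b / a; 0, 1], by rw [Matrix.det_fin_two_of]; ring⟩, ?_, ?_⟩
  · intro i j
    fin_cases i <;> fin_cases j <;> simp [Oset, hνu, hνui, h1]
    by_cases hc0 : c = 0
    · left; simp [hc0]
    · right
      rw [hνmul _ _ hc0 hpm, hνpm]
      rcases hc with h | h
      · exact absurd h hc0
      · omega
  · intro i j
    fin_cases i <;> fin_cases j <;> simp [Oset, hνu, hνui, h1]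
    by_cases hb0 : b = 0
    · left; simp [hb0]
    · right
      rw [div_eq_mul_inv, hνmul _ _ hb0 (inv_ne_zero ha), nu_inv' ν hνmul a ha, hνa]
      rcases hb with h | h
      · exact absurd h hb0
      · omega
  · ext i j
    erw [Matrix.SpecialLinearGroup.coe_mul, Matrix.SpecialLinearGroup.coe_mul]
    have hD : ((Dmat ϖ m : SL2 F) : Mat F) = !![ϖ ^ (-m), 0; 0, ϖ ^ m] := by
      simp [Dmat, hϖ0]
    have hnm : ϖ ^ (-m) = (ϖ ^ m)⁻¹ := by rw [_root_.zpow_neg]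
    fin_cases i <;> fin_cases j <;>
      simp [Matrix.SpecialLinearGroup.coe_mul, hD, Matrix.mul_apply, Fin.sum_univ_two, hnm,
        hu_def, ← ha_def, ← hb_def, ← hc_def, ← hd_def] <;>
      field_simp
    · linear_combination hdet

lemma nuExt_ge' (ν : F → ℤ) (x : F) (m : ℤ) (h : ((-m : ℤ) : WithTop ℤ) ≤ nuExt ν x) :
    x = 0 ∨ -m ≤ ν x := by
  by_cases hx : x = 0
  · exact Or.inl hx
  · right
    rw [nuExt, if_neg hx] at h
    exact_mod_cast h

lemma nuExt_eq' (ν : F → ℤ) (x : F) (m : ℤ) (h : ((-m : ℤ) : WithTop ℤ) = nuExt ν x) :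
    x ≠ 0 ∧ ν x = -m := by
  by_cases hx : x = 0
  · rw [nuExt, if_pos hx] at h
    exact absurd h (by simp)
  · refine ⟨hx, ?_⟩
    rw [nuExt, if_neg hx] at h
    exact_mod_cast h.symm

lemma neg_cond' (ν : F → ℤ) (hνmul : ∀ x y : F, x ≠ 0 → y ≠ 0 → ν (x * y) = ν x + ν y)
    (x : F) (m : ℤ) (h : x = 0 ∨ -m ≤ ν x) : -x = 0 ∨ -m ≤ ν (-x) := by
  rcases h with h | h
  · left; simp [h]
  · by_cases hx : x = 0
    · left; simp [hx]
    · right; rw [nu_neg' ν hνmul x hx]; exact h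

lemma m_nonneg' (ν : F → ℤ) (hνmul : ∀ x y : F, x ≠ 0 → y ≠ 0 → ν (x * y) = ν x + ν y)
    (hνadd : ∀ x y : F, x ≠ 0 → y ≠ 0 → x + y ≠ 0 → min (ν x) (ν y) ≤ ν (x + y))
    (g : SL2 F) (m : ℤ)
    (hA : (g : Mat F) 0 0 = 0 ∨ -m ≤ ν ((g : Mat F) 0 0))
    (hB : (g : Mat F) 0 1 = 0 ∨ -m ≤ ν ((g : Mat F) 0 1))
    (hC : (g : Mat F) 1 0 = 0 ∨ -m ≤ ν ((g : Mat F) 1 0))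
    (hD : (g : Mat F) 1 1 = 0 ∨ -m ≤ ν ((g : Mat F) 1 1)) : 0 ≤ m := by
  set a := (g : Mat F) 0 0
  set b := (g : Mat F) 0 1
  set c := (g : Mat F) 1 0
  set d := (g : Mat F) 1 1
  have hdet : a * d - b * c = 1 := by
    have := g.2
    rwa [Matrix.det_fin_two] at this
  have h1 : ν (1 : F) = 0 := nu_one' ν hνmul
  by_cases hbc : b = 0 ∨ c = 0
  · have had : a * d = 1 := by
      rcases hbc with h | h <;> [rw [h] at hdet; rw [h] at hdet] <;> linear_combination hdet
    have ha0 : a ≠ 0 := left_ne_zero_of_mul (had ▸ one_ne_zero)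
    have hd0 : d ≠ 0 := right_ne_zero_of_mul (had ▸ one_ne_zero)
    have := hνmul a d ha0 hd0
    rw [had, h1] at this
    rcases hA with h | h; · exact absurd h ha0
    rcases hD with h' | h'; · exact absurd h' hd0
    omega
  · push_neg at hbc
    obtain ⟨hb0, hc0⟩ := hbc
    have hνbc : ν (b * c) = ν b + ν c := hνmul b c hb0 hc0
    rcases hB with h | h; · exact absurd h hb0
    rcases hC with h' | h'; · exact absurd h' hc0
    by_cases had : a = 0 ∨ d = 0
    · have hbc1 : b * c = -1 := by
        rcases had with h'' | h'' <;> [rw [h''] at hdet; rw [h''] at hdet] <;> linear_combination -hdet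
      have : ν (b * c) = 0 := by
        rw [hbc1, show (-1 : F) = -(1 : F) by ring, nu_neg' ν hνmul 1 one_ne_zero, h1]
      omega
    · push_neg at had
      obtain ⟨ha0, hd0⟩ := had
      have hνad : ν (a * d) = ν a + ν d := hνmul a d ha0 hd0
      rcases hA with h'' | h''; · exact absurd h'' ha0
      rcases hD with h''' | h'''; · exact absurd h''' hd0
      have hmin := hνadd (a * d) (-(b * c)) (mul_ne_zero ha0 hd0)
        (neg_ne_zero.mpr (mul_ne_zero hb0 hc0))
        (by rw [← sub_eq_add_neg, hdet]; exact one_ne_zero)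
      rw [← sub_eq_add_neg, hdet, h1, nu_neg' ν hνmul _ (mul_ne_zero hb0 hc0)] at hmin
      omega


theorem cartan_decomposition_SL2
    (p : ℕ) [Fact p.Prime] (hp2 : p ≠ 2)
    (F : Type) [Field F] [CharZero F] [TopologicalSpace F] [IsTopologicalRing F]
    [MeasurableSpace F] [BorelSpace F]
    [Algebra ℚ_[p] F] [FiniteDimensional ℚ_[p] F]
    (ν : F → ℤ) (ϖ : F)
    (hϖ0 : ϖ ≠ 0) (hϖ1 : ν ϖ = 1)
    (hνmul : ∀ x y : F, x ≠ 0 → y ≠ 0 → ν (x * y) = ν x + ν y)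
    (hνadd : ∀ x y : F, x ≠ 0 → y ≠ 0 → x + y ≠ 0 → min (ν x) (ν y) ≤ ν (x + y))
    (hνp : 0 < ν ((p : F)))
    (hνext : ∀ x : ℚ_[p], x ≠ 0 → ν (algebraMap ℚ_[p] F x) = ν ((p : F)) * x.valuation)
    (hνnhds : ∀ s : Set F, s ∈ nhds (0 : F) ↔ ∃ n : ℤ, {x : F | x = 0 ∨ n ≤ ν x} ⊆ s) :
    ∀ g : SL2 F, ∀ m : ℤ,
      ((-m : ℤ) : WithTop ℤ) =
        min (min (nuExt ν ((g : Mat F) 0 0)) (nuExt ν ((g : Mat F) 0 1)))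
            (min (nuExt ν ((g : Mat F) 1 0)) (nuExt ν ((g : Mat F) 1 1))) →
      0 ≤ m ∧ ∃ k₁ ∈ Kset ν, ∃ k₂ ∈ Kset ν, g = k₁ * Dmat ϖ m * k₂ := by
  intro g m hmin
  have hA := nuExt_ge' ν ((g : Mat F) 0 0) m
    (hmin.le.trans (le_trans (min_le_left _ _) (min_le_left _ _)))
  have hB := nuExt_ge' ν ((g : Mat F) 0 1) m
    (hmin.le.trans (le_trans (min_le_left _ _) (min_le_right _ _)))
  have hC := nuExt_ge' ν ((g : Mat F) 1 0) m
    (hmin.le.trans (le_trans (min_le_right _ _) (min_le_left _ _)))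
  have hD := nuExt_ge' ν ((g : Mat F) 1 1) m
    (hmin.le.trans (le_trans (min_le_right _ _) (min_le_right _ _)))
  refine ⟨m_nonneg' ν hνmul hνadd g m hA hB hC hD, ?_⟩
  have hach : ((-m : ℤ) : WithTop ℤ) = nuExt ν ((g : Mat F) 0 0) ∨
      ((-m : ℤ) : WithTop ℤ) = nuExt ν ((g : Mat F) 0 1) ∨
      ((-m : ℤ) : WithTop ℤ) = nuExt ν ((g : Mat F) 1 0) ∨
      ((-m : ℤ) : WithTop ℤ) = nuExt ν ((g : Mat F) 1 1) := by
    rcases min_cases (min (nuExt ν ((g : Mat F) 0 0)) (nuExt ν ((g : Mat F) 0 1)))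
        (min (nuExt ν ((g : Mat F) 1 0)) (nuExt ν ((g : Mat F) 1 1))) with ⟨h, -⟩ | ⟨h, -⟩
    · rcases min_cases (nuExt ν ((g : Mat F) 0 0)) (nuExt ν ((g : Mat F) 0 1)) with
        ⟨h2, -⟩ | ⟨h2, -⟩
      · exact Or.inl (hmin.trans (h.trans h2))
      · exact Or.inr (Or.inl (hmin.trans (h.trans h2)))
    · rcases min_cases (nuExt ν ((g : Mat F) 1 0)) (nuExt ν ((g : Mat F) 1 1)) with
        ⟨h2, -⟩ | ⟨h2, -⟩
      · exact Or.inr (Or.inr (Or.inl (hmin.trans (h.trans h2))))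
      · exact Or.inr (Or.inr (Or.inr (hmin.trans (h.trans h2))))
  rcases hach with h | h | h | h
  · obtain ⟨ha0, hνa⟩ := nuExt_eq' ν _ m h
    exact key_decomp ν ϖ hϖ0 hϖ1 hνmul g m ha0 hνa hB hC
  · obtain ⟨hb0, hνb⟩ := nuExt_eq' ν _ m h
    have hcoe := coe_mul_wK g
    have e00 : ((g * wK : SL2 F) : Mat F) 0 0 = -((g : Mat F) 0 1) := by rw [hcoe]; simp
    have e01 : ((g * wK : SL2 F) : Mat F) 0 1 = (g : Mat F) 0 0 := by rw [hcoe]; simp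
    have e10 : ((g * wK : SL2 F) : Mat F) 1 0 = -((g : Mat F) 1 1) := by rw [hcoe]; simp
    obtain ⟨k₁, hk₁, k₂, hk₂, hg'⟩ := key_decomp ν ϖ hϖ0 hϖ1 hνmul (g * wK) m
      (by rw [e00]; exact neg_ne_zero.mpr hb0)
      (by rw [e00, nu_neg' ν hνmul _ hb0]; exact hνb)
      (by rw [e01]; exact hA)
      (by rw [e10]; exact neg_cond' ν hνmul _ m hD)
    refine ⟨k₁, hk₁, k₂ * wKi, K_mul' ν hνmul hνadd hk₂ (wKi_mem ν hνmul), ?_⟩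
    have h2 : g = (k₁ * Dmat ϖ m * k₂) * wK⁻¹ := by rw [← hg']; group
    rw [wK_inv] at h2
    rw [h2]; group
  · obtain ⟨hc0, hνc⟩ := nuExt_eq' ν _ m h
    have hcoe := coe_wK_mul g
    have e00 : ((wK * g : SL2 F) : Mat F) 0 0 = (g : Mat F) 1 0 := by rw [hcoe]; simp
    have e01 : ((wK * g : SL2 F) : Mat F) 0 1 = (g : Mat F) 1 1 := by rw [hcoe]; simp
    have e10 : ((wK * g : SL2 F) : Mat F) 1 0 = -((g : Mat F) 0 0) := by rw [hcoe]; simp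
    obtain ⟨k₁, hk₁, k₂, hk₂, hg'⟩ := key_decomp ν ϖ hϖ0 hϖ1 hνmul (wK * g) m
      (by rw [e00]; exact hc0)
      (by rw [e00]; exact hνc)
      (by rw [e01]; exact hD)
      (by rw [e10]; exact neg_cond' ν hνmul _ m hA)
    refine ⟨wKi * k₁, K_mul' ν hνmul hνadd (wKi_mem ν hνmul) hk₁, k₂, hk₂, ?_⟩
    have h2 : g = wK⁻¹ * (k₁ * Dmat ϖ m * k₂) := by rw [← hg']; group
    rw [wK_inv] at h2
    rw [h2]; group
  · obtain ⟨hd0, hνd⟩ := nuExt_eq' ν _ m h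
    have hcoe : ((wK * g * wK : SL2 F) : Mat F) =
        !![-((g : Mat F) 1 1), (g : Mat F) 1 0;
           (g : Mat F) 0 1, -((g : Mat F) 0 0)] := by
      rw [coe_mul_wK (wK * g), coe_wK_mul g]
      ext i j
      fin_cases i <;> fin_cases j <;> simp
    have e00 : ((wK * g * wK : SL2 F) : Mat F) 0 0 = -((g : Mat F) 1 1) := by rw [hcoe]; simp
    have e01 : ((wK * g * wK : SL2 F) : Mat F) 0 1 = (g : Mat F) 1 0 := by rw [hcoe]; simp
    have e10 : ((wK * g * wK : SL2 F) : Mat F) 1 0 = (g : Mat F) 0 1 := by rw [hcoe]; simp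
    obtain ⟨k₁, hk₁, k₂, hk₂, hg'⟩ := key_decomp ν ϖ hϖ0 hϖ1 hνmul (wK * g * wK) m
      (by rw [e00]; exact neg_ne_zero.mpr hd0)
      (by rw [e00, nu_neg' ν hνmul _ hd0]; exact hνd)
      (by rw [e01]; exact hC)
      (by rw [e10]; exact hB)
    refine ⟨wKi * k₁, K_mul' ν hνmul hνadd (wKi_mem ν hνmul) hk₁,
      k₂ * wKi, K_mul' ν hνmul hνadd hk₂ (wKi_mem ν hνmul), ?_⟩
    have h2 : g = wK⁻¹ * (k₁ * Dmat ϖ m * k₂) * wK⁻¹ := by rw [← hg']; group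
    rw [wK_inv] at h2
    rw [h2]; group


end
end

section
/- Let γ ∈ (F^×)² with chosen square root δ (δ² = γ, δ ≠ −1). Then the matrix r_γ := [[(1+δ)/2, (δ−1)/2],[(δ−1)/(2δ), (1+δ)/(2δ)]] has determinant 1, it satisfies r_γ⁻¹ · T_γ · r_γ = A where T_γ is the centralizer in SL₂(F) of 𝔱_γ = {[[0,bγ],[b,0]] : b ∈ F}, and r_γ⁻¹ · θ(r_γ) = [[(γ+1)/(2δ), (1−γ)/(2δ)],[(1−γ)/(2δ), (γ+1)/(2δ)]], which lies in A and has eigenvalue δ⁻¹ on the vector (1,1)ᵀ and eigenvalue δ on the vector (1,−1)ᵀ. -/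
open MeasureTheory Matrix Filter
open scoped Classical Topology Pointwise

noncomputable section

variable {F : Type} [Field F]

set_option maxHeartbeats 1000000 in
theorem rgamma_properties
    (p : ℕ) [Fact p.Prime] (hp2 : p ≠ 2)
    (F : Type) [Field F] [CharZero F] [TopologicalSpace F] [IsTopologicalRing F]
    [MeasurableSpace F] [BorelSpace F]
    [Algebra ℚ_[p] F] [FiniteDimensional ℚ_[p] F]
    (ν : F → ℤ) (ϖ : F)
    (hϖ0 : ϖ ≠ 0) (hϖ1 : ν ϖ = 1)
    (hνmul : ∀ x y : F, x ≠ 0 → y ≠ 0 → ν (x * y) = ν x + ν y)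
    (hνadd : ∀ x y : F, x ≠ 0 → y ≠ 0 → x + y ≠ 0 → min (ν x) (ν y) ≤ ν (x + y))
    (hνp : 0 < ν ((p : F)))
    (hνext : ∀ x : ℚ_[p], x ≠ 0 → ν (algebraMap ℚ_[p] F x) = ν ((p : F)) * x.valuation)
    (hνnhds : ∀ s : Set F, s ∈ nhds (0 : F) ↔ ∃ n : ℤ, {x : F | x = 0 ∨ n ≤ ν x} ⊆ s) :
    ∀ γ δ : F, δ ≠ 0 → δ ^ 2 = γ → δ ≠ -1 →
      ((rmat δ : SL2 F) : Mat F).det = 1 ∧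
      (fun g : SL2 F => (rmat δ)⁻¹ * g * rmat δ) '' Tset γ = (Aset : Set (SL2 F)) ∧
      (((rmat δ)⁻¹ * thetaSL (rmat δ) : SL2 F) : Mat F) =
        !![(γ + 1) / (2 * δ), (1 - γ) / (2 * δ); (1 - γ) / (2 * δ), (γ + 1) / (2 * δ)] ∧
      ((rmat δ)⁻¹ * thetaSL (rmat δ) : SL2 F) ∈ (Aset : Set (SL2 F)) ∧
      (!![(γ + 1) / (2 * δ), (1 - γ) / (2 * δ);
          (1 - γ) / (2 * δ), (γ + 1) / (2 * δ)] : Mat F).mulVec ![1, 1] = δ⁻¹ • ![1, 1] ∧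
      (!![(γ + 1) / (2 * δ), (1 - γ) / (2 * δ);
          (1 - γ) / (2 * δ), (γ + 1) / (2 * δ)] : Mat F).mulVec ![1, -1] = δ • ![1, -1] := by
  intro γ δ hδ hγ hδ1
  subst hγ
  have hr : ((rmat δ : SL2 F) : Mat F) =
      !![(1 + δ) / 2, (δ - 1) / 2; (δ - 1) / (2 * δ), (1 + δ) / (2 * δ)] := by
    simp [rmat, hδ]
  have hrinv : (((rmat δ)⁻¹ : SL2 F) : Mat F) =
      !![(1 + δ) / (2 * δ), -((δ - 1) / 2); -((δ - 1) / (2 * δ)), (1 + δ) / 2] := by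
    rw [Matrix.SpecialLinearGroup.coe_inv, hr, Matrix.adjugate_fin_two_of]
  refine ⟨(rmat δ).2, ?_, ?_, ?_, ?_, ?_⟩
  · -- image of Tset under conjugation is Aset
    ext g
    constructor
    · rintro ⟨h, hT, rfl⟩
      -- characterize h
      have h1 := hT 1
      have e00 := congrFun (congrFun h1 0) 0
      have e01 := congrFun (congrFun h1 0) 1
      have e10 := congrFun (congrFun h1 1) 0
      simp [antidiag, Matrix.mul_apply, Fin.sum_univ_two] at e00 e01 e10
      -- e gives: h 0 1 = δ^2 * h 1 0, h 1 1 = h 0 0 (roughly)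
      refine ⟨(h : Mat F) 0 0, δ * (h : Mat F) 1 0, ?_⟩
      have hh : (h : Mat F) = !![(h : Mat F) 0 0, δ ^ 2 * (h : Mat F) 1 0;
          (h : Mat F) 1 0, (h : Mat F) 0 0] := by
        have h2 := Matrix.eta_fin_two (h : Mat F)
        rw [e00, e10] at h2
        exact h2
      have hcoe : (((rmat δ)⁻¹ * h * rmat δ : SL2 F) : Mat F) =
          (((rmat δ)⁻¹ : SL2 F) : Mat F) * (h : Mat F) * ((rmat δ : SL2 F) : Mat F) := by
        simp
      rw [hcoe, hrinv, hr, hh]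
      ext i j
      fin_cases i <;> fin_cases j <;>
        · simp [Matrix.mul_apply, Fin.sum_univ_two]
          field_simp
          try ring_nf
          try field_simp
          try ring
    · rintro ⟨x, y, hg⟩
      refine ⟨rmat δ * g * (rmat δ)⁻¹, ?_, by group⟩
      intro b
      have hcoe : ((rmat δ * g * (rmat δ)⁻¹ : SL2 F) : Mat F) =
          ((rmat δ : SL2 F) : Mat F) * (g : Mat F) * (((rmat δ)⁻¹ : SL2 F) : Mat F) := by
        simp
      rw [hcoe, hrinv, hr, hg]
      ext i j
      fin_cases i <;> fin_cases j <;>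
        · simp [antidiag, Matrix.mul_apply, Fin.sum_univ_two]
          field_simp
          try ring_nf
          try field_simp
          try ring
  · -- r⁻¹ θ(r) computation
    have hθ : ((thetaSL (rmat δ) : SL2 F) : Mat F) =
        !![(1 + δ) / 2, -((δ - 1) / 2); -((δ - 1) / (2 * δ)), (1 + δ) / (2 * δ)] := by
      simp [thetaSL, hr]
    have hcoe : (((rmat δ)⁻¹ * thetaSL (rmat δ) : SL2 F) : Mat F) =
        (((rmat δ)⁻¹ : SL2 F) : Mat F) * ((thetaSL (rmat δ) : SL2 F) : Mat F) := by simp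
    rw [hcoe, hrinv, hθ]
    ext i j
    fin_cases i <;> fin_cases j <;>
      · simp [Matrix.mul_apply, Fin.sum_univ_two]
        field_simp
        try ring_nf
        try field_simp
        try ring
  · -- membership in Aset
    have hθ : ((thetaSL (rmat δ) : SL2 F) : Mat F) =
        !![(1 + δ) / 2, -((δ - 1) / 2); -((δ - 1) / (2 * δ)), (1 + δ) / (2 * δ)] := by
      simp [thetaSL, hr]
    have hcoe : (((rmat δ)⁻¹ * thetaSL (rmat δ) : SL2 F) : Mat F) =
        (((rmat δ)⁻¹ : SL2 F) : Mat F) * ((thetaSL (rmat δ) : SL2 F) : Mat F) := by simp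
    refine ⟨(δ ^ 2 + 1) / (2 * δ), (1 - δ ^ 2) / (2 * δ), ?_⟩
    rw [hcoe, hrinv, hθ]
    ext i j
    fin_cases i <;> fin_cases j <;>
      · simp [Matrix.mul_apply, Fin.sum_univ_two]
        field_simp
        try ring_nf
        try field_simp
        try ring
  · -- eigenvector (1,1)
    ext i
    fin_cases i <;>
      · simp [Matrix.mulVec, dotProduct, Fin.sum_univ_two]
        field_simp
        try ring_nf
        try field_simp
        try ring
  · -- eigenvector (1,-1)
    ext i
    fin_cases i <;>
      · simp [Matrix.mulVec, dotProduct, Fin.sum_univ_two]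
        field_simp
        try ring_nf
        try field_simp
        try ring

end
end
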